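/- For natural numbers n, u, r, i with i ≤ r, the identity ∑_{t=i}^{r} (-1)^{t-i} · C(t, i) · C(n-t, r-t) · C(u, t) = C(n-u, r-i) · C(u, i) holds (interpreting binomial coefficients with possibly negative upper argument via the generalized convention C(-a, s) = (-1)^s · C(a+s-1, s)). -/

import Mathlib

/-- The generalized binomial coefficient `C(k, s)` for an integer upper argument `k`
and natural lower argument `s`, defined by `C(k, s) = ∏_{j=0}^{s-1} (k - j) / s!`. -/
noncomputable def genChoose (k : ℤ) (s : ℕ) : ℚ :=
  (∏ j ∈ Finset.range s, ((k : ℚ) - j)) / (s.factorial : ℚ)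

open Polynomial Finset

lemma descPochhammer_smeval_prod (x : ℚ) (s : ℕ) :
    (descPochhammer ℤ s).smeval x = ∏ j ∈ Finset.range s, (x - j) := by
  induction s with
  | zero => simp [descPochhammer_zero]
  | succ k ih =>
    rw [descPochhammer_succ_right, smeval_mul, ih, Finset.prod_range_succ, smeval_sub,
      smeval_X, smeval_natCast]
    simp

lemma descPochhammer_eval_prod (x : ℚ) (s : ℕ) :
    (descPochhammer ℚ s).eval x = ∏ j ∈ Finset.range s, (x - j) := by
  induction s with
  | zero => simp [descPochhammer_zero]
  | succ k ih => rw [descPochhammer_succ_eval, ih, Finset.prod_range_succ]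

lemma ringChoose_eq (x : ℚ) (s : ℕ) :
    Ring.choose x s = (∏ j ∈ Finset.range s, (x - j)) / (s.factorial : ℚ) := by
  have h := Ring.descPochhammer_eq_factorial_smul_choose x s
  rw [descPochhammer_smeval_prod, nsmul_eq_mul] at h
  have hf : (s.factorial : ℚ) ≠ 0 := by exact_mod_cast s.factorial_ne_zero
  rw [eq_div_iff hf, h]
  ring

lemma prod_reflect (x : ℚ) (k : ℕ) :
    ∏ j ∈ Finset.range k, (x - j)
      = (-1 : ℚ)^k * ∏ j ∈ Finset.range k, (((k : ℚ) - 1 - x) - j) := by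
  rw [← descPochhammer_eval_prod, ← descPochhammer_eval_prod,
    descPochhammer_eval_eq_ascPochhammer,
    show x - k + 1 = -((k:ℚ) - 1 - x) by ring,
    ascPochhammer_eval_neg_eq_descPochhammer]

lemma neg_choose (x : ℚ) (k : ℕ) :
    Ring.choose x k = (-1 : ℚ)^k * Ring.choose ((k : ℚ) - 1 - x) k := by
  rw [ringChoose_eq, ringChoose_eq, prod_reflect]
  ring

lemma genChoose_eq (k : ℤ) (s : ℕ) : genChoose k s = Ring.choose (k : ℚ) s := by
  rw [genChoose, ringChoose_eq]

theorem delsarte_binom_identity (n u r i : ℕ) (h : i ≤ r) :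
    ∑ t ∈ Finset.Icc i r,
      (-1 : ℚ) ^ (t - i) * genChoose (t : ℤ) i * genChoose ((n : ℤ) - t) (r - t)
        * genChoose (u : ℤ) t
      = genChoose ((n : ℤ) - u) (r - i) * genChoose (u : ℤ) i := by
  simp only [genChoose_eq]
  push_cast
  set m := r - i with hm
  have hr : r = i + m := by omega
  have hmr : (m : ℚ) = (r : ℚ) - i := by
    rw [hm, Nat.cast_sub h]
  have key : ∀ s ∈ Finset.range (m + 1),
      (-1 : ℚ) ^ ((i + s) - i) * Ring.choose ((i + s : ℕ) : ℚ) i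
        * Ring.choose ((n : ℚ) - (i + s : ℕ)) (r - (i + s))
        * Ring.choose (u : ℚ) (i + s)
      = ((-1 : ℚ)^m * Ring.choose (u : ℚ) i)
        * (Ring.choose ((u : ℚ) - i) s * Ring.choose ((r : ℚ) - 1 - n) (m - s)) := by
    intro s hs
    have hsm : s ≤ m := by simpa using Nat.lt_succ_iff.mp (Finset.mem_range.mp hs)
    have h1 : Ring.choose ((i + s : ℕ) : ℚ) i * Ring.choose (u : ℚ) (i + s)
        = Ring.choose (u : ℚ) i * Ring.choose ((u : ℚ) - i) s := by
      have := Ring.choose_smul_choose (u : ℚ) (n := i + s) (k := i) (Nat.le_add_right i s)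
      rw [Nat.add_sub_cancel_left] at this
      rw [Ring.choose_natCast, ← nsmul_eq_mul, this]
    have h2 : Ring.choose ((n : ℚ) - (i + s : ℕ)) (r - (i + s))
        = (-1 : ℚ)^(m - s) * Ring.choose ((r : ℚ) - 1 - n) (m - s) := by
      have hrs : r - (i + s) = m - s := by omega
      rw [hrs, neg_choose ((n : ℚ) - (i + s : ℕ)) (m - s)]
      congr 2
      push_cast [Nat.cast_sub hsm]
      rw [hmr]; ring
    have hsign : (-1 : ℚ)^s * (-1 : ℚ)^(m - s) = (-1 : ℚ)^m := by
      rw [← pow_add]; congr 1; omega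
    rw [Nat.add_sub_cancel_left, h2]
    linear_combination ((-1:ℚ)^(m-s) * (-1:ℚ)^s * Ring.choose ((r:ℚ)-1-n) (m-s)) * h1
      + (Ring.choose ((r:ℚ)-1-n) (m-s) * Ring.choose (u:ℚ) i
          * Ring.choose ((u:ℚ)-i) s) * hsign
  rw [← Finset.Ico_add_one_right_eq_Icc, Finset.sum_Ico_eq_sum_range, show r + 1 - i = m + 1 by omega,
    Finset.sum_congr rfl key, ← Finset.mul_sum]
  have hv := Ring.add_choose_eq (r := (u:ℚ) - i) (s := (r:ℚ) - 1 - n) m (Commute.all _ _)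
  rw [Finset.Nat.sum_antidiagonal_eq_sum_range_succ_mk] at hv
  rw [← hv, neg_choose ((n:ℚ) - u) m,
    show ((u:ℚ) - i) + ((r:ℚ) - 1 - (n:ℚ)) = (m:ℚ) - 1 - ((n:ℚ) - u) by rw [hmr]; ring]
  ring
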